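/- arXiv:2310.11373 — 3 statements merged into one kernel-verified Lean document; each statement's English description precedes it below -/
import Mathlib

section
/- Under the getShardIndex assignment, every control shard contains at least N_c nodes and every process shard contains at least N_p nodes; moreover when N_c ∣ N and N_p ∣ N, every control shard has exactly N_c nodes and every process shard exactly N_p nodes, and there are exactly N/N_c control shards and N/N_p process shards. -/
/-- The process shard index of node `c` in the getShardIndex assignment. -/
def index1 (N Np c : ℕ) : ℕ := min (c / Np) (N / Np - 1)

/-- The control shard index of node `c` in the getShardIndex assignment. -/
def index2 (N Np Nc c : ℕ) : ℕ := min (index1 N Np c / (Nc / Np)) (N / Nc - 1)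

/-- The set of nodes assigned to process shard `i`. -/
def processShard (N Np i : ℕ) : Finset ℕ := (Finset.range N).filter (fun c => index1 N Np c = i)

/-- The set of nodes assigned to control shard `j`. -/
def controlShard (N Np Nc j : ℕ) : Finset ℕ :=
  (Finset.range N).filter (fun c => index2 N Np Nc c = j)

lemma min_div_lower (N d j : ℕ) (hd : 0 < d) (hj : j < N / d) :
    Finset.Ico (j*d) (j*d + d) ⊆
      (Finset.range N).filter (fun c => min (c/d) (N/d-1) = j) := by
  intro c hc
  simp only [Finset.mem_Ico] at hc
  have hcd : c / d = j :=
    Nat.div_eq_of_lt_le (by omega) (by nlinarith [hc.2])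
  have hjle : j ≤ N/d - 1 := Nat.le_sub_one_of_lt hj
  have hcN : c < N := by
    have h1 : j*d + d ≤ (N/d) * d := by nlinarith [hj]
    have h2 : (N/d) * d ≤ N := Nat.div_mul_le_self N d
    omega
  simp [Finset.mem_filter, hcN, hcd, min_eq_left, hjle]

lemma min_div_upper (N d j : ℕ) (hd : 0 < d) (hdvd : d ∣ N) :
    (Finset.range N).filter (fun c => min (c/d) (N/d-1) = j) ⊆
      Finset.Ico (j*d) (j*d + d) := by
  intro c hc
  simp only [Finset.mem_filter, Finset.mem_range] at hc
  have hlt : c / d < N / d := Nat.div_lt_div_of_lt_of_dvd hdvd hc.1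
  have hcd : c / d = j := by
    have h := hc.2
    rw [min_eq_left (Nat.le_sub_one_of_lt hlt)] at h
    exact h
  have h1 : (c/d)*d + c % d = c := Nat.div_add_mod' c d
  rw [hcd] at h1
  have h2 : c % d < d := Nat.mod_lt c hd
  simp only [Finset.mem_Ico]
  omega

lemma index2_eq_min (N Np Nc : ℕ) (hNp : 0 < Np) (hdvd : Np ∣ Nc) (hNc0 : 0 < Nc)
    (hNc : Nc ≤ N) (c : ℕ) :
    index2 N Np Nc c = min (c / Nc) (N / Nc - 1) := by
  have hkpos : 0 < Nc / Np := Nat.div_pos (Nat.le_of_dvd hNc0 hdvd) hNp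
  have hNpk : Np * (Nc / Np) = Nc := Nat.mul_div_cancel' hdvd
  have hdd : ∀ a : ℕ, a / Np / (Nc / Np) = a / Nc := by
    intro a; rw [Nat.div_div_eq_div_mul, hNpk]
  have hq1 : 1 ≤ N / Np :=
    (Nat.one_le_div_iff hNp).2 ((Nat.le_of_dvd hNc0 hdvd).trans hNc)
  -- key: (N/Np - 1)/(Nc/Np) ≥ N/Nc - 1
  have hkey : N / Nc - 1 ≤ (N / Np - 1) / (Nc / Np) := by
    have h1 : N / Np ≤ (N / Np - 1) + (Nc / Np) := by omega
    have h2 : N / Np / (Nc / Np) ≤ ((N / Np - 1) + (Nc / Np)) / (Nc / Np) :=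
      Nat.div_le_div_right h1
    rw [Nat.add_div_right _ hkpos] at h2
    have h3 : N / Nc ≤ (N / Np - 1) / (Nc / Np) + 1 := by rw [← hdd N]; exact h2
    exact Nat.sub_le_iff_le_add.2 h3
  unfold index2 index1
  rcases le_or_gt (c / Np) (N / Np - 1) with h | h
  · rw [min_eq_left h, hdd]
  · rw [min_eq_right h.le]
    have hc1 : (N / Np - 1) / (Nc / Np) ≤ c / Nc := by
      rw [← hdd c]; exact Nat.div_le_div_right h.le
    rw [min_eq_right hkey, min_eq_right (hkey.trans hc1)]

lemma image_min_div (N d : ℕ) (hd : 0 < d) (hdvd : d ∣ N) :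
    ((Finset.range N).image (fun c => min (c/d) (N/d-1))).card = N / d := by
  have : (Finset.range N).image (fun c => min (c/d) (N/d-1)) = Finset.range (N/d) := by
    ext x
    simp only [Finset.mem_image, Finset.mem_range]
    constructor
    · rintro ⟨c, hc, rfl⟩
      have hlt : c / d < N / d := Nat.div_lt_div_of_lt_of_dvd hdvd hc
      omega
    · intro hx
      refine ⟨x * d, ?_, ?_⟩
      · have := (Nat.lt_div_iff_mul_lt' hdvd x).1 hx
        nlinarith
      · rw [Nat.mul_div_cancel _ hd]
        exact min_eq_left (by omega)
  rw [this, Finset.card_range]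

lemma min_div_card_ge (N d j : ℕ) (hd : 0 < d) (hj : j < N / d) :
    d ≤ ((Finset.range N).filter (fun c => min (c/d) (N/d-1) = j)).card := by
  have := Finset.card_le_card (min_div_lower N d j hd hj)
  simpa using this

lemma min_div_card_eq (N d j : ℕ) (hd : 0 < d) (hdvd : d ∣ N) (hj : j < N / d) :
    ((Finset.range N).filter (fun c => min (c/d) (N/d-1) = j)).card = d := by
  have h1 := min_div_card_ge N d j hd hj
  have h2 := Finset.card_le_card (min_div_upper N d j hd hdvd)
  simp only [Nat.card_Ico] at h2
  omega

/-- Every control shard has at least `N_c` nodes and every process shard at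
least `N_p` nodes; when `N_c ∣ N` and `N_p ∣ N` these cardinalities are exact and there
are exactly `N/N_c` control shards and `N/N_p` process shards. -/
theorem shard_sizes (N Np Nc : ℕ) (hNp : 0 < Np) (hdvd : Np ∣ Nc) (hNc0 : 0 < Nc)
    (hNc : Nc ≤ N) :
    (∀ i, i < N / Np → Np ≤ (processShard N Np i).card) ∧
    (∀ j, j < N / Nc → Nc ≤ (controlShard N Np Nc j).card) ∧
    (Np ∣ N → Nc ∣ N →
      (∀ i, i < N / Np → (processShard N Np i).card = Np) ∧
      (∀ j, j < N / Nc → (controlShard N Np Nc j).card = Nc) ∧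
      ((Finset.range N).image (fun c => index1 N Np c)).card = N / Np ∧
      ((Finset.range N).image (fun c => index2 N Np Nc c)).card = N / Nc) := by
  have hp : ∀ i, processShard N Np i
      = (Finset.range N).filter (fun c => min (c/Np) (N/Np-1) = i) := fun i => rfl
  have hc : ∀ j, controlShard N Np Nc j
      = (Finset.range N).filter (fun c => min (c/Nc) (N/Nc-1) = j) := by
    intro j
    unfold controlShard
    apply Finset.filter_congr
    intro c _
    rw [index2_eq_min N Np Nc hNp hdvd hNc0 hNc c]
  refine ⟨?_, ?_, ?_⟩
  · intro i hi; rw [hp i]; exact min_div_card_ge N Np i hNp hi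
  · intro j hj; rw [hc j]
    exact min_div_card_ge N Nc j hNc0 hj
  · intro hNpN hNcN
    refine ⟨?_, ?_, ?_, ?_⟩
    · intro i hi; rw [hp i]; exact min_div_card_eq N Np i hNp hNpN hi
    · intro j hj; rw [hc j]; exact min_div_card_eq N Nc j hNc0 hNcN hj
    · exact image_min_div N Np hNp hNpN
    · have : ((Finset.range N).image (fun c => index2 N Np Nc c))
          = (Finset.range N).image (fun c => min (c/Nc) (N/Nc-1)) := by
        apply Finset.image_congr
        intro c _
        exact index2_eq_min N Np Nc hNp hdvd hNc0 hNc c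
      rw [this]
      exact image_min_div N Nc hNc0 hNcN
end

section
/- In a partially synchronous model, a shard tolerating an L-fraction of liveness attackers can accept a block only with at least (1 - 2L)·M favorable honest-distinguishable votes; hence the safety threshold satisfies S < 1 - 2L, while in the synchronous model S < 1 - L. In both cases, if additionally L ≤ S, then L < 1/3 (partially synchronous) and L < 1/2 (synchronous) respectively. -/
/-- With quorum `q ≤ M - L·M`: in the partially synchronous model
(`S·M < q - L·M`) the safety threshold satisfies `S < 1 - 2L`, and if moreover `L ≤ S`
then `L < 1/3`; in the synchronous model (`S·M < q`) we get `S < 1 - L`, and if `L ≤ S`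
then `L < 1/2`. -/
theorem safety_liveness_bounds (M : ℕ) (hM : 0 < M) (L S q : ℝ)
    (hL0 : 0 ≤ L) (hL1 : L < 1) (hS0 : 0 ≤ S) (hS1 : S < 1)
    (hq : q ≤ (M : ℝ) - L * M) :
    (S * M < q - L * M → S < 1 - 2 * L ∧ (L ≤ S → L < 1/3)) ∧
    (S * M < q → S < 1 - L ∧ (L ≤ S → L < 1/2)) := by
  have hMpos : (0 : ℝ) < M := by exact_mod_cast hM
  constructor
  · intro h
    have hS' : S < 1 - 2 * L := by nlinarith
    exact ⟨hS', fun hLS => by nlinarith⟩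
  · intro h
    have hS' : S < 1 - L := by nlinarith
    exact ⟨hS', fun hLS => by nlinarith⟩
end

section
/- Suicidal attack bound: if the adversary controls a nodes in a process shard and each adversarial node that is silent twice within τ epochs is expelled at the epoch following its second silence, then the adversary can cause the process shard to fail unanimity for at most 2a consecutive epochs before all a adversarial nodes are expelled; after at most 2a epochs the shard reaches unanimity in every subsequent epoch. -/
open Finset

private def cntSil (a : ℕ) (silent : Fin a → ℕ → Bool) (k : Fin a) (t : ℕ) : ℕ :=
  ((Finset.range t).filter (fun t' => silent k t' = true)).card

private lemma cntSil_mono (a : ℕ) (silent : Fin a → ℕ → Bool) (k : Fin a)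
    {s t : ℕ} (h : s ≤ t) : cntSil a silent k s ≤ cntSil a silent k t :=
  Finset.card_le_card (Finset.filter_subset_filter _ (Finset.range_subset_range.2 h))

private lemma cntSil_lt (a : ℕ) (silent : Fin a → ℕ → Bool) (k : Fin a)
    {s t : ℕ} (hs : silent k s = true) (hst : s < t) :
    cntSil a silent k s < cntSil a silent k t := by
  have hsub : insert s ((Finset.range s).filter (fun t' => silent k t' = true)) ⊆
      (Finset.range t).filter (fun t' => silent k t' = true) := by
    intro x hx
    rcases Finset.mem_insert.1 hx with rfl | hx
    · exact Finset.mem_filter.2 ⟨Finset.mem_range.2 hst, hs⟩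
    · rcases Finset.mem_filter.1 hx with ⟨hx1, hx2⟩
      exact Finset.mem_filter.2 ⟨Finset.mem_range.2 (lt_trans (Finset.mem_range.1 hx1) hst), hx2⟩
  have hnot : s ∉ (Finset.range s).filter (fun t' => silent k t' = true) := by
    simp [Finset.mem_filter]
  calc cntSil a silent k s < cntSil a silent k s + 1 := Nat.lt_succ_self _
    _ = (insert s ((Finset.range s).filter (fun t' => silent k t' = true))).card := by
        rw [Finset.card_insert_of_notMem hnot]; rfl
    _ ≤ _ := Finset.card_le_card hsub

private lemma master (a : ℕ) (silent : Fin a → ℕ → Bool) (S : Finset ℕ)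
    (hS : ∀ t ∈ S, ∃ k : Fin a, silent k t = true ∧ cntSil a silent k t < 2) :
    S.card ≤ 2 * a := by
  classical
  rcases Nat.eq_zero_or_pos a with rfl | hpos
  · have : S = ∅ := by
      ext t; simp only [Finset.notMem_empty, iff_false]
      intro ht
      rcases hS t ht with ⟨k, _⟩
      exact k.elim0
    simp [this]
  · set P : ℕ → Prop := fun t => ∃ k : Fin a, silent k t = true ∧ cntSil a silent k t < 2
      with hPdef
    have hP : ∀ t ∈ S, P t := hS
    let f : ℕ → Fin a × Fin 2 := fun t =>
      if h : P t then (h.choose, ⟨cntSil a silent h.choose t, h.choose_spec.2⟩)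
      else (⟨0, hpos⟩, 0)
    have key : ∀ s t : ℕ, P s → P t → s < t → f s ≠ f t := by
      intro s t hPs hPt hlt hft
      simp only [f, dif_pos hPs, dif_pos hPt, Prod.mk.injEq, Fin.mk.injEq] at hft
      obtain ⟨hk, hc⟩ := hft
      have := cntSil_lt a silent hPs.choose hPs.choose_spec.1 hlt
      rw [hk] at this hc
      omega
    have hinj : Set.InjOn f S := by
      intro s hs t ht hft
      by_contra hne
      rcases lt_or_gt_of_ne hne with h | h
      · exact key s t (hP s hs) (hP t ht) h hft
      · exact key t s (hP t ht) (hP s hs) h hft.symm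
    calc S.card ≤ (Finset.univ : Finset (Fin a × Fin 2)).card :=
      Finset.card_le_card_of_injOn f (fun _ _ => Finset.mem_univ _) hinj
    _ = 2 * a := by simp [mul_comm]

private lemma master2 (a : ℕ) (silent : Fin a → ℕ → Bool)
    (hall : ∀ t < 2 * a, ∃ k : Fin a, silent k t = true ∧ cntSil a silent k t < 2)
    (k : Fin a) : 2 ≤ cntSil a silent k (2 * a) := by
  classical
  have hall' : ∀ t ∈ Finset.range (2 * a),
      ∃ k : Fin a, silent k t = true ∧ cntSil a silent k t < 2 :=
    fun t ht => hall t (Finset.mem_range.1 ht)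
  let f : ∀ t ∈ Finset.range (2 * a), Fin a × Fin 2 := fun t ht =>
    ((hall' t ht).choose, ⟨cntSil a silent (hall' t ht).choose t, (hall' t ht).choose_spec.2⟩)
  have hmaps : ∀ t ht, f t ht ∈ (Finset.univ : Finset (Fin a × Fin 2)) :=
    fun _ _ => Finset.mem_univ _
  have key : ∀ s t (hs : s ∈ Finset.range (2 * a)) (ht : t ∈ Finset.range (2 * a)),
      s < t → f s hs ≠ f t ht := by
    intro s t hs ht hlt hft
    simp only [f, Prod.mk.injEq, Fin.mk.injEq] at hft
    obtain ⟨hk, hc⟩ := hft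
    have := cntSil_lt a silent (hall' s hs).choose (hall' s hs).choose_spec.1 hlt
    rw [hk] at this hc
    omega
  have hinj : ∀ s t (hs : s ∈ Finset.range (2 * a)) (ht : t ∈ Finset.range (2 * a)),
      f s hs = f t ht → s = t := by
    intro s t hs ht hft
    by_contra hne
    rcases lt_or_gt_of_ne hne with h | h
    · exact key s t hs ht h hft
    · exact key t s ht hs h hft.symm
  have hcard : (Finset.univ : Finset (Fin a × Fin 2)).card ≤ (Finset.range (2 * a)).card := by
    simp [mul_comm]
  obtain ⟨t₁, ht₁, hft₁⟩ := Finset.surj_on_of_inj_on_of_card_le f hmaps hinj hcard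
    (k, ⟨1, by norm_num⟩) (Finset.mem_univ _)
  simp only [f, Prod.mk.injEq, Fin.mk.injEq] at hft₁
  obtain ⟨hk, hc⟩ := hft₁
  have hsil := (hall' t₁ ht₁).choose_spec.1
  have hlt := cntSil_lt a silent (hall' t₁ ht₁).choose hsil (Finset.mem_range.1 ht₁)
  rw [← hc, ← hk] at hlt
  omega

/-- Suicidal attack bound: an epoch `t` fails iff some not-yet-expelled
adversarial node (fewer than 2 earlier silences) is silent at `t`. Then at most `2a`
epochs fail in total, any run of consecutive failed epochs from epoch 0 has length at
most `2a`, and if the first `2a` epochs all failed then no later epoch fails. -/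
theorem suicidal_attack_bound (a : ℕ) (silent : Fin a → ℕ → Bool) :
    (∀ T : ℕ,
      ((Finset.range T).filter (fun t => ∃ k : Fin a, silent k t = true ∧
        ((Finset.range t).filter (fun t' => silent k t' = true)).card < 2)).card ≤ 2 * a) ∧
    (∀ m : ℕ, (∀ t < m, ∃ k : Fin a, silent k t = true ∧
        ((Finset.range t).filter (fun t' => silent k t' = true)).card < 2) → m ≤ 2 * a) ∧
    ((∀ t < 2 * a, ∃ k : Fin a, silent k t = true ∧
        ((Finset.range t).filter (fun t' => silent k t' = true)).card < 2) →
      ∀ t, 2 * a ≤ t → ¬ ∃ k : Fin a, silent k t = true ∧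
        ((Finset.range t).filter (fun t' => silent k t' = true)).card < 2) := by
  classical
  refine ⟨fun T => ?_, fun m hm => ?_, fun hall t ht ⟨k, hsil, hc⟩ => ?_⟩
  · exact master a silent _ (fun t ht => (Finset.mem_filter.1 ht).2)
  · have := master a silent (Finset.range m) (fun t ht => hm t (Finset.mem_range.1 ht))
    simpa using this
  · have h2 := master2 a silent hall k
    have hmono := cntSil_mono a silent k ht
    have : (2 : ℕ) ≤ ((Finset.range t).filter (fun t' => silent k t' = true)).card :=
      le_trans h2 hmono
    omega
end
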